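/- Let N ≥ 1 and let x₁, …, x_N be points in (0,1)ⁿ with n ≥ 2. Then there exists a nonzero function ψ on (0,1)ⁿ, which is a finite linear combination of products sin(π r₁ x⁽¹⁾)⋯sin(π r_n x⁽ⁿ⁾) with r₁² + ⋯ + r_n² equal to a fixed value r, such that ψ(x₁) = ⋯ = ψ(x_N) = 0. -/

import Mathlib

open Set Finset Real


/-- Real and imaginary parts of `(3+4i)^m`. -/
def PQ : ℕ → ℤ × ℤ
  | 0 => (1, 0)
  | (m+1) => (3 * (PQ m).1 - 4 * (PQ m).2, 4 * (PQ m).1 + 3 * (PQ m).2)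

lemma PQ_sq (m : ℕ) : (PQ m).1 ^ 2 + (PQ m).2 ^ 2 = 25 ^ m := by
  induction m with
  | zero => simp [PQ]
  | succ m ih =>
    have : (PQ (m+1)).1 = 3 * (PQ m).1 - 4 * (PQ m).2 ∧
        (PQ (m+1)).2 = 4 * (PQ m).1 + 3 * (PQ m).2 := by simp [PQ]
    rw [this.1, this.2]
    calc (3 * (PQ m).1 - 4 * (PQ m).2) ^ 2 + (4 * (PQ m).1 + 3 * (PQ m).2) ^ 2
        = 25 * ((PQ m).1 ^ 2 + (PQ m).2 ^ 2) := by ring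
      _ = 25 ^ (m + 1) := by rw [ih, pow_succ]; ring

lemma PQ_emod (m : ℕ) (hm : m ≠ 0) : (PQ m).1 % 5 = 3 ∧ (PQ m).2 % 5 = 4 := by
  induction m with
  | zero => omega
  | succ m ih =>
    have h1 : (PQ (m+1)).1 = 3 * (PQ m).1 - 4 * (PQ m).2 := by simp [PQ]
    have h2 : (PQ (m+1)).2 = 4 * (PQ m).1 + 3 * (PQ m).2 := by simp [PQ]
    rcases Nat.eq_zero_or_pos m with rfl | hm'
    · simp [PQ]
    · obtain ⟨e1, e2⟩ := ih (by omega)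
      constructor
      · rw [h1]; omega
      · rw [h2]; omega


lemma integral_cos_pi_int (k : ℤ) (hk : k ≠ 0) :
    ∫ s in (0:ℝ)..1, Real.cos ((k : ℝ) * π * s) = 0 := by
  have hc : (k : ℝ) * π ≠ 0 :=
    mul_ne_zero (by exact_mod_cast hk) pi_ne_zero
  rw [intervalIntegral.integral_comp_mul_left Real.cos hc]
  simp [integral_cos, Real.sin_int_mul_pi]

lemma sin_orthogonal (a b : ℕ) (ha : 0 < a) (hb : 0 < b) :
    ∫ s in (0:ℝ)..1, Real.sin (π * a * s) * Real.sin (π * b * s)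
      = if a = b then 1/2 else 0 := by
  have key : ∀ s : ℝ, Real.sin (π * a * s) * Real.sin (π * b * s)
      = (Real.cos ((((a:ℤ) - b : ℤ) : ℝ) * π * s)
          - Real.cos ((((a:ℤ) + b : ℤ) : ℝ) * π * s)) / 2 := by
    intro s
    have h1 := Real.cos_sub (π * a * s) (π * b * s)
    have h2 := Real.cos_add (π * a * s) (π * b * s)
    have e1 : (((a:ℤ) - b : ℤ) : ℝ) * π * s = π * a * s - π * b * s := by push_cast; ring
    have e2 : (((a:ℤ) + b : ℤ) : ℝ) * π * s = π * a * s + π * b * s := by push_cast; ring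
    rw [e1, e2, h1, h2]; ring
  simp only [key]
  have i1 : IntervalIntegrable
      (fun s : ℝ => Real.cos ((((a:ℤ) - b : ℤ) : ℝ) * π * s)) MeasureTheory.volume 0 1 :=
    (Real.continuous_cos.comp (continuous_const.mul continuous_id)).intervalIntegrable 0 1
  have i2 : IntervalIntegrable
      (fun s : ℝ => Real.cos ((((a:ℤ) + b : ℤ) : ℝ) * π * s)) MeasureTheory.volume 0 1 :=
    (Real.continuous_cos.comp (continuous_const.mul continuous_id)).intervalIntegrable 0 1
  rw [intervalIntegral.integral_div, intervalIntegral.integral_sub i1 i2]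
  by_cases hab : a = b
  · subst hab
    have h0 : ∫ s in (0:ℝ)..1, Real.cos ((((a:ℤ) - a : ℤ) : ℝ) * π * s) = 1 := by
      simp
    rw [h0, integral_cos_pi_int ((a:ℤ) + a) (by omega)]
    norm_num
  · rw [integral_cos_pi_int _ (by omega), integral_cos_pi_int _ (by omega)]
    simp [hab]

lemma sin_linear_independence {k : ℕ} (a : Fin k → ℕ) (ha : ∀ j, 0 < a j)
    (hinj : Function.Injective a) (d : Fin k → ℝ)
    (h : ∀ s ∈ Ioo (0:ℝ) 1, ∑ j, d j * Real.sin (π * a j * s) = 0) :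
    ∀ j, d j = 0 := by
  intro j0
  set F : ℝ → ℝ := fun s => ∑ j, d j * Real.sin (π * a j * s) with hF
  have hFc : Continuous F := by
    apply continuous_finset_sum
    intro j _
    exact continuous_const.mul (Real.continuous_sin.comp (by continuity))
  have hclos : EqOn F 0 (Icc (0:ℝ) 1) := by
    have h1 : EqOn F 0 (Ioo (0:ℝ) 1) := fun s hs => h s hs
    have := h1.closure hFc continuous_const
    rwa [closure_Ioo (by norm_num : (0:ℝ) ≠ 1)] at this
  have hzero : ∫ s in (0:ℝ)..1, F s * Real.sin (π * a j0 * s) = 0 := by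
    rw [intervalIntegral.integral_congr (g := fun _ => 0)]
    · simp
    · intro s hs
      rw [uIcc_of_le (by norm_num : (0:ℝ) ≤ 1)] at hs
      simp [hclos hs]
  have hval : ∫ s in (0:ℝ)..1, F s * Real.sin (π * a j0 * s) = d j0 * (1/2) := by
    calc ∫ s in (0:ℝ)..1, F s * Real.sin (π * a j0 * s)
        = ∫ s in (0:ℝ)..1, ∑ j, d j * (Real.sin (π * a j * s) * Real.sin (π * a j0 * s)) := by
          apply intervalIntegral.integral_congr
          intro s _
          simp only [hF, Finset.sum_mul, mul_assoc]
      _ = ∑ j, ∫ s in (0:ℝ)..1, d j * (Real.sin (π * a j * s) * Real.sin (π * a j0 * s)) := by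
          apply intervalIntegral.integral_finset_sum
          intro j _
          exact (continuous_const.mul ((Real.continuous_sin.comp (by continuity)).mul
            (Real.continuous_sin.comp (by continuity)))).intervalIntegrable 0 1
      _ = ∑ j, d j * (if a j = a j0 then 1/2 else 0) := by
          refine Finset.sum_congr rfl fun j _ => ?_
          rw [intervalIntegral.integral_const_mul, sin_orthogonal _ _ (ha j) (ha j0)]
      _ = d j0 * (1/2) := by
          rw [Finset.sum_eq_single j0]
          · simp
          · intro j _ hj
            rw [if_neg (fun hc => hj (hinj hc)), mul_zero]
          · intro hj; exact absurd (Finset.mem_univ j0) hj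
  rw [hval] at hzero
  linarith

/-- Given `N ≥ 1` points in the open cube `(0,1)ⁿ`, `n ≥ 2`, there is a nonzero linear
combination `ψ` of eigenfunctions `x ↦ ∏ᵢ sin(π rᵢ x⁽ⁱ⁾)` with `r₁² + ⋯ + r_n²` equal to a
fixed value `r`, vanishing at all `N` points. -/
theorem eigenfunction_vanishing_at_finitely_many_points
    (n N : ℕ) (hn : 2 ≤ n) (hN : 1 ≤ N)
    (x : Fin N → (Fin n → ℝ)) (hx : ∀ m i, x m i ∈ Ioo (0:ℝ) 1) :
    ∃ (r : ℕ) (S : Finset (Fin n → ℕ)) (c : (Fin n → ℕ) → ℝ),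
      (∀ v ∈ S, (∀ i, 0 < v i) ∧ ∑ i, (v i) ^ 2 = r) ∧
      (∃ y : Fin n → ℝ, (∀ i, y i ∈ Ioo (0:ℝ) 1) ∧
        ∑ v ∈ S, c v * ∏ i, Real.sin (π * v i * y i) ≠ 0) ∧
      (∀ m, ∑ v ∈ S, c v * ∏ i, Real.sin (π * v i * x m i) = 0) := by
  classical
  set i0 : Fin n := ⟨0, by omega⟩ with hi0Def
  set i1 : Fin n := ⟨1, by omega⟩ with hi1Def
  have hi01 : i0 ≠ i1 := by simp [hi0Def, hi1Def, Fin.ext_iff]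
  set a : Fin (N+1) → ℕ := fun j => 5 ^ (2 * j.val) * (PQ (2 * (N - j.val) + 1)).1.natAbs
    with haDef
  set b : Fin (N+1) → ℕ := fun j => 5 ^ (2 * j.val) * (PQ (2 * (N - j.val) + 1)).2.natAbs
    with hbDef
  -- 5 does not divide the natAbs of the first component
  have hP5 : ∀ j : Fin (N+1), ¬ (5 ∣ (PQ (2 * (N - j.val) + 1)).1.natAbs) := by
    intro j hdvd
    have hmod := (PQ_emod (2 * (N - j.val) + 1) (by omega)).1
    have : (5 : ℤ) ∣ (PQ (2 * (N - j.val) + 1)).1 := by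
      have h5 : (5:ℤ).natAbs ∣ (PQ (2 * (N - j.val) + 1)).1.natAbs := by simpa using hdvd
      exact Int.natAbs_dvd_natAbs.mp h5
    omega
  have hPne : ∀ j : Fin (N+1), (PQ (2 * (N - j.val) + 1)).1.natAbs ≠ 0 := by
    intro j h
    have hmod := (PQ_emod (2 * (N - j.val) + 1) (by omega)).1
    have := Int.natAbs_eq_zero.mp h
    omega
  have hQne : ∀ j : Fin (N+1), (PQ (2 * (N - j.val) + 1)).2.natAbs ≠ 0 := by
    intro j h
    have hmod := (PQ_emod (2 * (N - j.val) + 1) (by omega)).2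
    have := Int.natAbs_eq_zero.mp h
    omega
  have haPos : ∀ j, 0 < a j := by
    intro j
    exact Nat.mul_pos (Nat.pow_pos (by norm_num : 0 < 5)) (Nat.pos_of_ne_zero (hPne j))
  have hbPos : ∀ j, 0 < b j := by
    intro j
    exact Nat.mul_pos (Nat.pow_pos (by norm_num : 0 < 5)) (Nat.pos_of_ne_zero (hQne j))
  have hkey : ∀ j k : Fin (N+1), j.val < k.val → a j ≠ a k := by
    intro j k hlt h
    rw [haDef] at h
    simp only at h
    have hsplit : 5 ^ (2 * k.val) = 5 ^ (2 * j.val) * 5 ^ (2 * k.val - 2 * j.val) := by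
      rw [← pow_add]; congr 1; omega
    rw [hsplit, mul_assoc] at h
    have hp := Nat.eq_of_mul_eq_mul_left (Nat.pow_pos (n := 2 * j.val) (by norm_num : 0 < 5)) h
    apply hP5 j
    rw [hp]
    exact (dvd_pow_self 5 (by omega : 2 * k.val - 2 * j.val ≠ 0)).mul_right _
  have haInj : Function.Injective a := by
    intro j k h
    rcases lt_trichotomy j.val k.val with hlt | heq | hgt
    · exact absurd h (hkey j k hlt)
    · exact Fin.ext heq
    · exact absurd h.symm (hkey k j hgt)
  have hab_sq : ∀ j : Fin (N+1), a j ^ 2 + b j ^ 2 = 5 ^ (4 * N + 2) := by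
    intro j
    have hcast : ((a j ^ 2 + b j ^ 2 : ℕ) : ℤ) = ((5 ^ (4 * N + 2) : ℕ) : ℤ) := by
      push_cast [haDef, hbDef]
      rw [mul_pow, mul_pow, sq_abs, sq_abs, ← mul_add, PQ_sq]
      rw [show (25 : ℤ) = 5 ^ 2 by norm_num, ← pow_mul, ← pow_mul, ← pow_add]
      congr 1
      have := j.isLt
      omega
    exact_mod_cast hcast
  set v : Fin (N+1) → (Fin n → ℕ) :=
    fun j i => if i = i0 then a j else if i = i1 then b j else 1 with hvDef
  have hv0 : ∀ j, v j i0 = a j := fun j => by simp [hvDef]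
  have hv1 : ∀ j, v j i1 = b j := fun j => by simp [hvDef, hi01.symm]
  have hvInj : Function.Injective v := by
    intro j k h
    apply haInj
    rw [← hv0 j, ← hv0 k, h]
  -- sum of squares
  have hsq : ∀ j : Fin (N+1), ∑ i, (v j i) ^ 2 = 5 ^ (4 * N + 2) + (n - 2) := by
    intro j
    have hsub : ({i0, i1} : Finset (Fin n)) ⊆ Finset.univ := Finset.subset_univ _
    rw [← Finset.sum_sdiff hsub]
    have h1 : ∑ i ∈ ({i0, i1} : Finset (Fin n)), (v j i) ^ 2 = a j ^ 2 + b j ^ 2 := by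
      rw [Finset.sum_pair hi01, hv0, hv1]
    have h2 : ∑ i ∈ Finset.univ \ ({i0, i1} : Finset (Fin n)), (v j i) ^ 2 = n - 2 := by
      have hone : ∀ i ∈ Finset.univ \ ({i0, i1} : Finset (Fin n)), (v j i) ^ 2 = 1 := by
        intro i hi
        simp only [Finset.mem_sdiff, Finset.mem_insert, Finset.mem_singleton] at hi
        push_neg at hi
        simp [hvDef, hi.2.1, hi.2.2]
      rw [Finset.sum_congr rfl hone, Finset.sum_const, smul_eq_mul, mul_one,
        Finset.card_sdiff_of_subset hsub, Finset.card_univ, Fintype.card_fin, Finset.card_pair hi01]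
    rw [h1, h2, hab_sq j, Nat.add_comm]
  -- the coefficient vector from linear dependence
  set g : Fin (N+1) → (Fin N → ℝ) :=
    fun j m => ∏ i, Real.sin (π * (v j i) * x m i) with hgDef
  have hnotLI : ¬ LinearIndependent ℝ g := by
    intro hLI
    have := hLI.fintype_card_le_finrank
    rw [Module.finrank_fin_fun, Fintype.card_fin] at this
    omega
  obtain ⟨cc, hccsum, j0, hj0⟩ := Fintype.not_linearIndependent_iff.mp hnotLI
  set c : (Fin n → ℕ) → ℝ :=
    fun w => if h : ∃ j, v j = w then cc h.choose else 0 with hcDef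
  have hcv : ∀ j, c (v j) = cc j := by
    intro j
    have hex : ∃ j', v j' = v j := ⟨j, rfl⟩
    rw [hcDef]
    simp only [dif_pos hex]
    congr 1
    exact hvInj hex.choose_spec
  have himg : ∀ y : Fin n → ℝ,
      ∑ w ∈ Finset.image v Finset.univ, c w * ∏ i, Real.sin (π * w i * y i)
        = ∑ j, cc j * ∏ i, Real.sin (π * v j i * y i) := by
    intro y
    rw [Finset.sum_image (fun j _ k _ h => hvInj h)]
    exact Finset.sum_congr rfl fun j _ => by rw [hcv j]
  have hvanish : ∀ m, ∑ j, cc j * ∏ i, Real.sin (π * v j i * x m i) = 0 := by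
    intro m
    have := congrFun hccsum m
    simpa [Finset.sum_apply, hgDef] using this
  refine ⟨5 ^ (4 * N + 2) + (n - 2), Finset.image v Finset.univ, c, ?_, ?_, ?_⟩
  · intro w hw
    obtain ⟨j, _, rfl⟩ := Finset.mem_image.mp hw
    refine ⟨fun i => ?_, hsq j⟩
    rw [hvDef]
    simp only
    split_ifs
    · exact haPos j
    · exact hbPos j
    · norm_num
  · -- nonvanishing point
    by_contra hcon
    push_neg at hcon
    set t0 : ℝ := Real.sqrt 2 / 2 with ht0Def
    have ht0mem : t0 ∈ Ioo (0:ℝ) 1 := by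
      constructor
      · positivity
      · rw [ht0Def, div_lt_one (by norm_num : (0:ℝ) < 2)]
        rw [show (2:ℝ) = ((2:ℕ):ℝ) by norm_num] at *
        exact (Real.sqrt_lt' (by norm_num)).mpr (by norm_num)
    have ht0irr : Irrational t0 := by
      have := irrational_sqrt_two.div_natCast (m := 2) (by norm_num)
      simpa [ht0Def] using this
    have hsinb : ∀ j : Fin (N+1), Real.sin (π * b j * t0) ≠ 0 := by
      intro j h0
      rw [Real.sin_eq_zero_iff] at h0
      obtain ⟨z, hz⟩ := h0
      have h2 : (z : ℝ) * π = ((b j : ℝ) * t0) * π := by rw [hz]; ring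
      have hz' : (z : ℝ) = (b j : ℝ) * t0 := mul_right_cancel₀ pi_ne_zero h2
      have hirr : Irrational ((b j : ℝ) * t0) := ht0irr.natCast_mul (hbPos j).ne'
      exact absurd hz'.symm (hirr.ne_int z)
    -- evaluation point family
    have hY : ∀ s ∈ Ioo (0:ℝ) 1,
        ∑ j, (cc j * Real.sin (π * b j * t0)) * Real.sin (π * a j * s) = 0 := by
      intro s hs
      set Y : Fin n → ℝ := fun i => if i = i0 then s else if i = i1 then t0 else 1/2 with hYDef
      have hYmem : ∀ i, Y i ∈ Ioo (0:ℝ) 1 := by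
        intro i
        rw [hYDef]
        simp only
        split_ifs
        · exact hs
        · exact ht0mem
        · norm_num
      have hzero := hcon Y hYmem
      rw [himg Y] at hzero
      have hprod : ∀ j : Fin (N+1), ∏ i, Real.sin (π * v j i * Y i)
          = Real.sin (π * a j * s) * Real.sin (π * b j * t0) := by
        intro j
        have hsub : ({i0, i1} : Finset (Fin n)) ⊆ Finset.univ := Finset.subset_univ _
        rw [← Finset.prod_sdiff hsub]
        have h1 : ∏ i ∈ ({i0, i1} : Finset (Fin n)), Real.sin (π * v j i * Y i)
            = Real.sin (π * a j * s) * Real.sin (π * b j * t0) := by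
          rw [Finset.prod_pair hi01, hv0, hv1]
          rw [hYDef]
          simp [hi01.symm]
        have h2 : ∏ i ∈ Finset.univ \ ({i0, i1} : Finset (Fin n)),
            Real.sin (π * v j i * Y i) = 1 := by
          apply Finset.prod_eq_one
          intro i hi
          simp only [Finset.mem_sdiff, Finset.mem_insert, Finset.mem_singleton] at hi
          push_neg at hi
          have hvi : v j i = 1 := by
            rw [hvDef]; simp only; rw [if_neg hi.2.1, if_neg hi.2.2]
          have hYi : Y i = 1/2 := by
            rw [hYDef]; simp only; rw [if_neg hi.2.1, if_neg hi.2.2]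
          rw [hvi, hYi]
          rw [show π * ((1:ℕ):ℝ) * (1/2) = π / 2 by push_cast; ring]
          exact Real.sin_pi_div_two
        rw [h1, h2, one_mul]
      rw [← hzero]
      apply Finset.sum_congr rfl
      intro j _
      rw [hprod j]
      ring
    have := sin_linear_independence a haPos haInj
      (fun j => cc j * Real.sin (π * b j * t0)) hY j0
    rcases mul_eq_zero.mp this with h | h
    · exact hj0 h
    · exact hsinb j0 h
  · intro m
    rw [himg (x m)]
    exact hvanish m
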